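/- Let 0 < a < b, μ > 0 and α > 0. Let v : ℝ² → ℝ² be twice continuously differentiable and w : ℝ² → ℝ² continuously differentiable on a neighborhood of the closed annulus {x : a ≤ |x| ≤ b}. Suppose v(x)·x = 0 and w(x)·x = 0 whenever |x| ∈ {a, b}, that ∂₁v₂(x) − ∂₂v₁(x) = 0 whenever |x| = b, and that v satisfies the Navier-slip condition on |x| = a. Then −∫_Ω Δv(x)·w(x) dx = ∫_Ω Σ_{i,j=1}² ∂ᵢvⱼ(x) ∂ᵢwⱼ(x) dx + (1/a − α/μ) ∮_{∂B(0,a)} v_τ w_τ ds + (1/b) ∮_{∂B(0,b)} v_τ w_τ ds. -/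

import Mathlib

open Real MeasureTheory

noncomputable section

/-- Partial derivative `∂₁ f` of a scalar function on `ℝ²`. -/
def pd1 (f : ℝ × ℝ → ℝ) : ℝ × ℝ → ℝ := fun x => fderiv ℝ f x (1, 0)

/-- Partial derivative `∂₂ f` of a scalar function on `ℝ²`. -/
def pd2 (f : ℝ × ℝ → ℝ) : ℝ × ℝ → ℝ := fun x => fderiv ℝ f x (0, 1)

/-- First component of a vector field on `ℝ²`. -/
def cmp1 (v : ℝ × ℝ → ℝ × ℝ) : ℝ × ℝ → ℝ := fun x => (v x).1

/-- Second component of a vector field on `ℝ²`. -/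
def cmp2 (v : ℝ × ℝ → ℝ × ℝ) : ℝ × ℝ → ℝ := fun x => (v x).2

/-- The open annulus `Ω = {x ∈ ℝ² : a < |x| < b}`. -/
def ann (a b : ℝ) : Set (ℝ × ℝ) := {x | a ^ 2 < x.1 ^ 2 + x.2 ^ 2 ∧ x.1 ^ 2 + x.2 ^ 2 < b ^ 2}

/-- The closed annulus `{x ∈ ℝ² : a ≤ |x| ≤ b}`. -/
def cann (a b : ℝ) : Set (ℝ × ℝ) := {x | a ^ 2 ≤ x.1 ^ 2 + x.2 ^ 2 ∧ x.1 ^ 2 + x.2 ^ 2 ≤ b ^ 2}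

/-- The circle `∂B(0, r) = {x ∈ ℝ² : |x| = r}`. -/
def circ (r : ℝ) : Set (ℝ × ℝ) := {x | x.1 ^ 2 + x.2 ^ 2 = r ^ 2}

/-- Boundary integral `∮_{∂B(0,r)} f ds = ∫₀^{2π} f(r cos θ, r sin θ) r dθ`. -/
def bInt (r : ℝ) (f : ℝ × ℝ → ℝ) : ℝ :=
  ∫ θ in (0 : ℝ)..(2 * π), f (r * Real.cos θ, r * Real.sin θ) * r

/-- Tangential component `v_τ(x) = v(x)·(x₂, −x₁)/r` on the circle of radius `r`. -/
def tang (r : ℝ) (v : ℝ × ℝ → ℝ × ℝ) : ℝ × ℝ → ℝ :=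
  fun x => ((v x).1 * x.2 - (v x).2 * x.1) / r

/-- The Navier-slip condition on the inner circle `|x| = a`:
`μ Σ_{i,j} τ_i(x) n_j(x) (∂_i v_j(x) + ∂_j v_i(x)) = α v(x)·τ(x)` for all `|x| = a`,
where `n(x) = −x/a` and `τ(x) = (x₂, −x₁)/a`. -/
def navierSlip (μ α a : ℝ) (v : ℝ × ℝ → ℝ × ℝ) : Prop :=
  ∀ x : ℝ × ℝ, x.1 ^ 2 + x.2 ^ 2 = a ^ 2 →
    μ * ((x.2 / a) * (-(x.1 / a)) * (pd1 (cmp1 v) x + pd1 (cmp1 v) x)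
       + (x.2 / a) * (-(x.2 / a)) * (pd1 (cmp2 v) x + pd2 (cmp1 v) x)
       + (-(x.1 / a)) * (-(x.1 / a)) * (pd2 (cmp1 v) x + pd1 (cmp2 v) x)
       + (-(x.1 / a)) * (-(x.2 / a)) * (pd2 (cmp2 v) x + pd2 (cmp2 v) x))
    = α * ((v x).1 * (x.2 / a) + (v x).2 * (-(x.1 / a)))

-- basic facts
lemma isOpen_ann (a b : ℝ) : IsOpen (ann a b) := by
  have h1 : IsOpen {x : ℝ × ℝ | a ^ 2 < x.1 ^ 2 + x.2 ^ 2} := isOpen_lt (by fun_prop) (by fun_prop)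
  have h2 : IsOpen {x : ℝ × ℝ | x.1 ^ 2 + x.2 ^ 2 < b ^ 2} := isOpen_lt (by fun_prop) (by fun_prop)
  exact h1.inter h2

lemma ann_subset_cann (a b : ℝ) : ann a b ⊆ cann a b := fun x hx => ⟨hx.1.le, hx.2.le⟩

-- pd in terms of a full derivative
lemma pd_eq1 {v : ℝ × ℝ → ℝ × ℝ} {x : ℝ × ℝ} {L : ℝ × ℝ →L[ℝ] ℝ × ℝ}
    (h : HasFDerivAt v L x) (u : ℝ × ℝ) : fderiv ℝ (cmp1 v) x u = (L u).1 := by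
  have : fderiv ℝ (fun y => (v y).1) x = (ContinuousLinearMap.fst ℝ ℝ ℝ).comp L := h.fst.fderiv
  show fderiv ℝ (fun y => (v y).1) x u = (L u).1
  rw [this]; rfl

lemma pd_eq2 {v : ℝ × ℝ → ℝ × ℝ} {x : ℝ × ℝ} {L : ℝ × ℝ →L[ℝ] ℝ × ℝ}
    (h : HasFDerivAt v L x) (u : ℝ × ℝ) : fderiv ℝ (cmp2 v) x u = (L u).2 := by
  have : fderiv ℝ (fun y => (v y).2) x = (ContinuousLinearMap.snd ℝ ℝ ℝ).comp L := h.snd.fderiv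
  show fderiv ℝ (fun y => (v y).2) x u = (L u).2
  rw [this]; rfl

example (v : ℝ × ℝ → ℝ × ℝ) (x : ℝ × ℝ) (L : ℝ × ℝ →L[ℝ] ℝ × ℝ) (h : HasFDerivAt v L x) :
    pd1 (cmp1 v) x = (L (1,0)).1 := pd_eq1 h (1,0)

namespace GreenAux

/-- the polar map -/
def Phi (p : ℝ × ℝ) : ℝ × ℝ := (p.1 * Real.cos p.2, p.1 * Real.sin p.2)

lemma continuous_Phi : Continuous Phi := by unfold Phi; fun_prop

lemma Phi_sq (p : ℝ × ℝ) : (Phi p).1 ^ 2 + (Phi p).2 ^ 2 = p.1 ^ 2 := by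
  have := sin_sq_add_cos_sq p.2
  simp only [Phi]; nlinarith [this]

/-- A(r,θ) = F(Φ)·x -/
def pA (F : ℝ × ℝ → ℝ × ℝ) (p : ℝ × ℝ) : ℝ :=
  (F (Phi p)).1 * (p.1 * Real.cos p.2) + (F (Phi p)).2 * (p.1 * Real.sin p.2)

def pB (F : ℝ × ℝ → ℝ × ℝ) (p : ℝ × ℝ) : ℝ :=
  -((F (Phi p)).1 * Real.sin p.2) + (F (Phi p)).2 * Real.cos p.2

def pA' (F : ℝ × ℝ → ℝ × ℝ) (p : ℝ × ℝ) : ℝ :=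
  ((fderiv ℝ F (Phi p)) (Real.cos p.2, Real.sin p.2)).1 * (p.1 * Real.cos p.2)
    + (F (Phi p)).1 * Real.cos p.2
  + (((fderiv ℝ F (Phi p)) (Real.cos p.2, Real.sin p.2)).2 * (p.1 * Real.sin p.2)
    + (F (Phi p)).2 * Real.sin p.2)

def pB' (F : ℝ × ℝ → ℝ × ℝ) (p : ℝ × ℝ) : ℝ :=
  -(((fderiv ℝ F (Phi p)) (p.1 * -Real.sin p.2, p.1 * Real.cos p.2)).1 * Real.sin p.2
      + (F (Phi p)).1 * Real.cos p.2)
  + (((fderiv ℝ F (Phi p)) (p.1 * -Real.sin p.2, p.1 * Real.cos p.2)).2 * Real.cos p.2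
      + (F (Phi p)).2 * -Real.sin p.2)

lemma hasDerivAt_pA {F : ℝ × ℝ → ℝ × ℝ} {U : Set (ℝ × ℝ)}
    (hdiff : ∀ y ∈ U, HasFDerivAt F (fderiv ℝ F y) y) {r θ : ℝ}
    (hx : Phi (r, θ) ∈ U) :
    HasDerivAt (fun s => pA F (s, θ)) (pA' F (r, θ)) r := by
  have hγ : HasDerivAt (fun s : ℝ => ((s * Real.cos θ, s * Real.sin θ) : ℝ × ℝ))
      (Real.cos θ, Real.sin θ) r :=
    (hasDerivAt_mul_const (Real.cos θ)).prodMk (hasDerivAt_mul_const (Real.sin θ))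
  have hc := (hdiff _ hx).comp_hasDerivAt r hγ
  have hc1 := hasFDerivAt_fst.comp_hasDerivAt r hc
  have hc2 := hasFDerivAt_snd.comp_hasDerivAt r hc
  have h1 := (hc1.mul (hasDerivAt_mul_const (Real.cos θ))).add
      (hc2.mul (hasDerivAt_mul_const (Real.sin θ)))
  convert h1 using 1
  all_goals rfl

lemma hasDerivAt_pB {F : ℝ × ℝ → ℝ × ℝ} {U : Set (ℝ × ℝ)}
    (hdiff : ∀ y ∈ U, HasFDerivAt F (fderiv ℝ F y) y) {r θ : ℝ}
    (hx : Phi (r, θ) ∈ U) :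
    HasDerivAt (fun t => pB F (r, t)) (pB' F (r, θ)) θ := by
  have hγ : HasDerivAt (fun t : ℝ => ((r * Real.cos t, r * Real.sin t) : ℝ × ℝ))
      (r * -Real.sin θ, r * Real.cos θ) θ :=
    (((Real.hasDerivAt_cos θ).const_mul r).prodMk ((Real.hasDerivAt_sin θ).const_mul r)).congr_deriv
      (by ring_nf)
  have hc := (hdiff _ hx).comp_hasDerivAt θ hγ
  have hc1 := hasFDerivAt_fst.comp_hasDerivAt θ hc
  have hc2 := hasFDerivAt_snd.comp_hasDerivAt θ hc
  have h1 := ((hc1.mul (Real.hasDerivAt_sin θ)).neg).add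
      (hc2.mul (Real.hasDerivAt_cos θ))
  convert h1 using 1
  all_goals rfl

/-- the key polar divergence identity -/
lemma sum_pA'_pB' (F : ℝ × ℝ → ℝ × ℝ) (p : ℝ × ℝ) :
    pA' F p + pB' F p
      = p.1 * (((fderiv ℝ F (Phi p)) (1, 0)).1 + ((fderiv ℝ F (Phi p)) (0, 1)).2) := by
  set M := fderiv ℝ F (Phi p) with hM
  have e1 : ((Real.cos p.2 : ℝ), Real.sin p.2)
      = Real.cos p.2 • ((1 : ℝ), (0 : ℝ)) + Real.sin p.2 • ((0 : ℝ), (1 : ℝ)) := by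
    simp [Prod.ext_iff]
  have e2 : ((p.1 * -Real.sin p.2 : ℝ), p.1 * Real.cos p.2)
      = (p.1 * -Real.sin p.2) • ((1 : ℝ), (0 : ℝ)) + (p.1 * Real.cos p.2) • ((0 : ℝ), (1 : ℝ)) := by
    simp [Prod.ext_iff]
  have h1 : M (Real.cos p.2, Real.sin p.2)
      = Real.cos p.2 • M (1, 0) + Real.sin p.2 • M (0, 1) := by
    rw [e1, map_add, M.map_smul, M.map_smul]
  have h2 : M (p.1 * -Real.sin p.2, p.1 * Real.cos p.2)
      = (p.1 * -Real.sin p.2) • M (1, 0) + (p.1 * Real.cos p.2) • M (0, 1) := by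
    rw [e2, map_add, M.map_smul, M.map_smul]
  have hcs := sin_sq_add_cos_sq p.2
  simp only [pA', pB', ← hM, h1, h2, Prod.fst_add, Prod.snd_add, Prod.smul_fst, Prod.smul_snd,
    smul_eq_mul]
  linear_combination (p.1 * ((M (1, 0)).1 + (M (0, 1)).2)) * hcs

lemma div_annulus (a b : ℝ) (ha : 0 < a) (hab : a < b)
    (F : ℝ × ℝ → ℝ × ℝ) (U : Set (ℝ × ℝ)) (hU : IsOpen U) (hUc : cann a b ⊆ U)
    (hF : ContDiffOn ℝ 1 F U) :
    (∫ x in ann a b, (pd1 (cmp1 F) x + pd2 (cmp2 F) x))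
      = (∫ θ in (0:ℝ)..(2*π), pA F (b, θ)) - ∫ θ in (0:ℝ)..(2*π), pA F (a, θ) := by
  have hπ := pi_pos
  have hdiff : ∀ y ∈ U, HasFDerivAt F (fderiv ℝ F y) y := fun y hy =>
    ((hF.differentiableOn one_ne_zero).differentiableAt (hU.mem_nhds hy)).hasFDerivAt
  have hDc : ContinuousOn (fderiv ℝ F) U := hF.continuousOn_fderiv_of_isOpen hU le_rfl
  have hFc : ContinuousOn F U := hF.continuousOn
  set dv : ℝ × ℝ → ℝ := fun y => ((fderiv ℝ F y) (1, 0)).1 + ((fderiv ℝ F y) (0, 1)).2 with hdv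
  have hpd : ∀ y ∈ U, pd1 (cmp1 F) y + pd2 (cmp2 F) y = dv y := by
    intro y hy
    rw [hdv]
    dsimp only
    rw [← pd_eq1 (hdiff y hy) (1, 0), ← pd_eq2 (hdiff y hy) (0, 1)]
    rfl
  have hdvc : ContinuousOn dv U :=
    ((hDc.clm_apply continuousOn_const).fst).add ((hDc.clm_apply continuousOn_const).snd)
  have hmap : ∀ p : ℝ × ℝ, p.1 ∈ Set.Icc a b → Phi p ∈ cann a b := by
    intro p hp
    have h2 := Phi_sq p
    constructor
    · show a ^ 2 ≤ (Phi p).1 ^ 2 + (Phi p).2 ^ 2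
      rw [h2]; nlinarith [hp.1]
    · show (Phi p).1 ^ 2 + (Phi p).2 ^ 2 ≤ b ^ 2
      rw [h2]; nlinarith [hp.1, hp.2]
  set K : Set (ℝ × ℝ) := Set.Icc a b ×ˢ Set.Icc (-π) π with hK
  have hKcomp : IsCompact K := isCompact_Icc.prod isCompact_Icc
  have hKU : Set.MapsTo Phi K U := fun p hp => hUc (hmap p hp.1)
  set S : Set (ℝ × ℝ) := Set.Ioo a b ×ˢ Set.Ioo (-π) π with hS
  have hSK : S ⊆ K := Set.prod_mono Set.Ioo_subset_Icc_self Set.Ioo_subset_Icc_self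
  have hSm : MeasurableSet S := measurableSet_Ioo.prod measurableSet_Ioo
  have hFPhi : ContinuousOn (fun p => F (Phi p)) K := hFc.comp continuous_Phi.continuousOn hKU
  have hDPhi : ContinuousOn (fun p => fderiv ℝ F (Phi p)) K :=
    hDc.comp continuous_Phi.continuousOn hKU
  have hcs : Continuous (fun p : ℝ × ℝ => ((Real.cos p.2 : ℝ), Real.sin p.2)) := by fun_prop
  have hcs2 : Continuous (fun p : ℝ × ℝ => ((p.1 * -Real.sin p.2 : ℝ), p.1 * Real.cos p.2)) := by
    fun_prop
  have hA'c : ContinuousOn (pA' F) K := by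
    unfold pA'
    exact (((hDPhi.clm_apply hcs.continuousOn).fst.mul
        (Continuous.continuousOn (by fun_prop))).add
      (hFPhi.fst.mul (Continuous.continuousOn (by fun_prop)))).add
      (((hDPhi.clm_apply hcs.continuousOn).snd.mul
        (Continuous.continuousOn (by fun_prop))).add
      (hFPhi.snd.mul (Continuous.continuousOn (by fun_prop))))
  have hB'c : ContinuousOn (pB' F) K := by
    unfold pB'
    exact (((hDPhi.clm_apply hcs2.continuousOn).fst.mul
        (Continuous.continuousOn (by fun_prop))).add
      (hFPhi.fst.mul (Continuous.continuousOn (by fun_prop)))).neg.add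
      (((hDPhi.clm_apply hcs2.continuousOn).snd.mul
        (Continuous.continuousOn (by fun_prop))).add
      (hFPhi.snd.mul (Continuous.continuousOn (by fun_prop))))
  have hpAc : ContinuousOn (pA F) K := by
    unfold pA
    exact (hFPhi.fst.mul (Continuous.continuousOn (by fun_prop))).add
      (hFPhi.snd.mul (Continuous.continuousOn (by fun_prop)))
  have hgc : ContinuousOn (fun p : ℝ × ℝ => p.1 * dv (Phi p)) K :=
    continuousOn_fst.mul (hdvc.comp continuous_Phi.continuousOn hKU)
  have hIA' : IntegrableOn (pA' F) S := (hA'c.integrableOn_compact hKcomp).mono_set hSK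
  have hIB' : IntegrableOn (pB' F) S := (hB'c.integrableOn_compact hKcomp).mono_set hSK
  -- step 0 : replace pd by dv
  have e0 : (∫ x in ann a b, (pd1 (cmp1 F) x + pd2 (cmp2 F) x)) = ∫ x in ann a b, dv x :=
    setIntegral_congr_fun (isOpen_ann a b).measurableSet
      (fun x hx => hpd x (hUc (ann_subset_cann a b hx)))
  -- step 1 : polar change of variables
  have e1 : (∫ p in polarCoord.target, p.1 • ((ann a b).indicator dv) (polarCoord.symm p))
      = ∫ x in ann a b, dv x := by
    rw [integral_comp_polarCoord_symm, integral_indicator (isOpen_ann a b).measurableSet]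
  have e2 : (∫ p in polarCoord.target, p.1 • ((ann a b).indicator dv) (polarCoord.symm p))
      = ∫ p in S, p.1 * dv (Phi p) := by
    rw [polarCoord_target]
    have hmeq : ∀ p ∈ Set.Ioi (0 : ℝ) ×ˢ Set.Ioo (-π) π,
        p.1 • ((ann a b).indicator dv) (polarCoord.symm p)
          = (Set.Ioo a b ×ˢ (Set.univ : Set ℝ)).indicator (fun q => q.1 * dv (Phi q)) p := by
      intro p hp
      have hp1 : (0 : ℝ) < p.1 := hp.1
      have hps : polarCoord.symm p = Phi p := polarCoord_symm_apply p
      have hsq := Phi_sq p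
      have hiff : Phi p ∈ ann a b ↔ p ∈ Set.Ioo a b ×ˢ (Set.univ : Set ℝ) := by
        constructor
        · intro h
          exact ⟨⟨by nlinarith [h.1], by nlinarith [h.2]⟩, trivial⟩
        · intro h
          exact ⟨by nlinarith [h.1.1], by nlinarith [h.1.1, h.1.2]⟩
      by_cases hm : Phi p ∈ ann a b
      · rw [hps, Set.indicator_of_mem hm, Set.indicator_of_mem (hiff.1 hm), smul_eq_mul]
      · rw [hps, Set.indicator_of_notMem hm,
          Set.indicator_of_notMem (fun hc => hm (hiff.2 hc)), smul_zero]
    rw [setIntegral_congr_fun (measurableSet_Ioi.prod measurableSet_Ioo) hmeq,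
      setIntegral_indicator (measurableSet_Ioo.prod MeasurableSet.univ), Set.prod_inter_prod,
      Set.inter_univ]
    have hset : Set.Ioi (0:ℝ) ∩ Set.Ioo a b = Set.Ioo a b :=
      Set.inter_eq_self_of_subset_right (fun x (hx : x ∈ Set.Ioo a b) => lt_trans ha hx.1)
    rw [hset]
  -- step 2 : divergence in polar coordinates
  have e3 : (∫ p in S, p.1 * dv (Phi p)) = ∫ p in S, (pA' F p + pB' F p) :=
    setIntegral_congr_fun hSm (fun p _ => (sum_pA'_pB' F p).symm)
  have e4 : (∫ p in S, (pA' F p + pB' F p)) = (∫ p in S, pA' F p) + ∫ p in S, pB' F p :=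
    integral_add hIA' hIB'
  -- step 3 : the angular part vanishes
  have eB : (∫ p in S, pB' F p) = 0 := by
    have hIB2 : IntegrableOn (pB' F) (Set.Ioo a b ×ˢ Set.Ioo (-π) π)
        ((volume : Measure ℝ).prod volume) := by
      rw [← Measure.volume_eq_prod]; exact hIB'
    have : (∫ p in S, pB' F p)
        = ∫ p in Set.Ioo a b ×ˢ Set.Ioo (-π) π, pB' F p ∂((volume : Measure ℝ).prod volume) := by
      rw [← Measure.volume_eq_prod, hS]
    rw [this, setIntegral_prod _ hIB2]
    have hzero : ∀ r ∈ Set.Ioo a b, (∫ θ in Set.Ioo (-π) π, pB' F (r, θ)) = 0 := by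
      intro r hr
      have hri : r ∈ Set.Icc a b := Set.Ioo_subset_Icc_self hr
      have hmem : ∀ θ ∈ Set.uIcc (-π) π, (r, θ) ∈ K := by
        intro θ hθ
        rw [Set.uIcc_of_le (by linarith : -π ≤ π)] at hθ
        exact ⟨hri, hθ⟩
      have hd : ∀ θ ∈ Set.uIcc (-π) π, HasDerivAt (fun t => pB F (r, t)) (pB' F (r, θ)) θ :=
        fun θ hθ => hasDerivAt_pB hdiff (hKU (hmem θ hθ))
      have hii : IntervalIntegrable (fun θ => pB' F (r, θ)) volume (-π) π :=
        (hB'c.comp (Continuous.continuousOn (by fun_prop)) hmem).intervalIntegrable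
      rw [← integral_Ioc_eq_integral_Ioo,
        ← intervalIntegral.integral_of_le (by linarith : -π ≤ π),
        intervalIntegral.integral_eq_sub_of_hasDerivAt hd hii]
      show pB F (r, π) - pB F (r, -π) = 0
      simp [pB, Phi]
    rw [setIntegral_congr_fun measurableSet_Ioo hzero]
    simp
  -- step 4 : the radial part gives the boundary terms
  have eA : (∫ p in S, pA' F p)
      = (∫ θ in Set.Ioo (-π) π, pA F (b, θ)) - ∫ θ in Set.Ioo (-π) π, pA F (a, θ) := by
    have hIA2 : Integrable (pA' F)
        (((volume : Measure ℝ).restrict (Set.Ioo a b)).prod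
          ((volume : Measure ℝ).restrict (Set.Ioo (-π) π))) := by
      rw [Measure.prod_restrict, ← Measure.volume_eq_prod]; exact hIA'
    have h1 : (∫ p in S, pA' F p)
        = ∫ θ in Set.Ioo (-π) π, ∫ r in Set.Ioo a b, pA' F (r, θ) := by
      calc (∫ p in S, pA' F p)
          = ∫ p, pA' F p ∂(((volume : Measure ℝ).restrict (Set.Ioo a b)).prod
              ((volume : Measure ℝ).restrict (Set.Ioo (-π) π))) := by
            rw [Measure.prod_restrict, ← Measure.volume_eq_prod, hS]
        _ = _ := integral_prod_symm _ hIA2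
    rw [h1]
    have h2 : ∀ θ ∈ Set.Ioo (-π) π,
        (∫ r in Set.Ioo a b, pA' F (r, θ)) = pA F (b, θ) - pA F (a, θ) := by
      intro θ hθ
      have hθI : θ ∈ Set.Icc (-π) π := Set.Ioo_subset_Icc_self hθ
      have hmem : ∀ r ∈ Set.uIcc a b, (r, θ) ∈ K := by
        intro r hr
        rw [Set.uIcc_of_le hab.le] at hr
        exact ⟨hr, hθI⟩
      have hd : ∀ r ∈ Set.uIcc a b, HasDerivAt (fun s => pA F (s, θ)) (pA' F (r, θ)) r :=
        fun r hr => hasDerivAt_pA hdiff (hKU (hmem r hr))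
      have hii : IntervalIntegrable (fun r => pA' F (r, θ)) volume a b :=
        (hA'c.comp (Continuous.continuousOn (by fun_prop)) hmem).intervalIntegrable
      rw [← integral_Ioc_eq_integral_Ioo, ← intervalIntegral.integral_of_le hab.le,
        intervalIntegral.integral_eq_sub_of_hasDerivAt hd hii]
    rw [setIntegral_congr_fun measurableSet_Ioo h2]
    have hIb : IntegrableOn (fun θ => pA F (b, θ)) (Set.Ioo (-π) π) := by
      apply IntegrableOn.mono_set _ Set.Ioo_subset_Icc_self
      apply ContinuousOn.integrableOn_compact isCompact_Icc
      exact hpAc.comp (Continuous.continuousOn (by fun_prop))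
        (fun θ hθ => ⟨Set.right_mem_Icc.2 hab.le, hθ⟩)
    have hIa : IntegrableOn (fun θ => pA F (a, θ)) (Set.Ioo (-π) π) := by
      apply IntegrableOn.mono_set _ Set.Ioo_subset_Icc_self
      apply ContinuousOn.integrableOn_compact isCompact_Icc
      exact hpAc.comp (Continuous.continuousOn (by fun_prop))
        (fun θ hθ => ⟨Set.left_mem_Icc.2 hab.le, hθ⟩)
    exact integral_sub hIb hIa
  -- step 5 : periodicity
  have hper : ∀ r : ℝ,
      (∫ θ in Set.Ioo (-π) π, pA F (r, θ)) = ∫ θ in (0:ℝ)..(2*π), pA F (r, θ) := by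
    intro r
    have hp2 : Function.Periodic (fun θ => pA F (r, θ)) (2 * π) := by
      intro θ
      simp only [pA, Phi, Real.cos_add_two_pi, Real.sin_add_two_pi]
    have h3 := hp2.intervalIntegral_add_eq (-π) 0
    rw [show -π + 2 * π = π by ring, zero_add] at h3
    rw [← integral_Ioc_eq_integral_Ioo,
      ← intervalIntegral.integral_of_le (by linarith : -π ≤ π), h3]
  rw [e0, ← e1, e2, e3, e4, eB, add_zero, eA, hper a, hper b]


/-- θ-derivative of `pA` -/
def pAt' (F : ℝ × ℝ → ℝ × ℝ) (p : ℝ × ℝ) : ℝ :=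
  ((fderiv ℝ F (Phi p)) (p.1 * -Real.sin p.2, p.1 * Real.cos p.2)).1 * (p.1 * Real.cos p.2)
    + (F (Phi p)).1 * (p.1 * -Real.sin p.2)
  + (((fderiv ℝ F (Phi p)) (p.1 * -Real.sin p.2, p.1 * Real.cos p.2)).2 * (p.1 * Real.sin p.2)
    + (F (Phi p)).2 * (p.1 * Real.cos p.2))

lemma hasDerivAt_pAt {F : ℝ × ℝ → ℝ × ℝ} {U : Set (ℝ × ℝ)}
    (hdiff : ∀ y ∈ U, HasFDerivAt F (fderiv ℝ F y) y) {r θ : ℝ}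
    (hx : Phi (r, θ) ∈ U) :
    HasDerivAt (fun t => pA F (r, t)) (pAt' F (r, θ)) θ := by
  have hγ : HasDerivAt (fun t : ℝ => ((r * Real.cos t, r * Real.sin t) : ℝ × ℝ))
      (r * -Real.sin θ, r * Real.cos θ) θ :=
    ((Real.hasDerivAt_cos θ).const_mul r).prodMk ((Real.hasDerivAt_sin θ).const_mul r)
  have hc := (hdiff _ hx).comp_hasDerivAt θ hγ
  have hc1 := hasFDerivAt_fst.comp_hasDerivAt θ hc
  have hc2 := hasFDerivAt_snd.comp_hasDerivAt θ hc
  have h1 := (hc1.mul ((Real.hasDerivAt_cos θ).const_mul r)).add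
      (hc2.mul ((Real.hasDerivAt_sin θ).const_mul r))
  convert h1 using 1
  all_goals rfl

lemma outer_algebra (b x1 x2 v1 v2 w1 w2 p11 p12 p21 p22 : ℝ) (hb : 0 < b)
    (hx : x1 ^ 2 + x2 ^ 2 = b ^ 2)
    (hv : v1 * x1 + v2 * x2 = 0) (hw : w1 * x1 + w2 * x2 = 0)
    (hcurl : p12 - p21 = 0)
    (htan : (-x2 * p11 + x1 * p21) * x1 + v1 * -x2 + ((-x2 * p12 + x1 * p22) * x2 + v2 * x1)
      = 0) :
    (w1 * p11 + w2 * p12) * x1 + (w1 * p21 + w2 * p22) * x2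
      = -(1 / b) * ((v1 * x2 - v2 * x1) / b * ((w1 * x2 - w2 * x1) / b) * b) := by
  have hb2 : (b : ℝ) ≠ 0 := ne_of_gt hb
  have hw1 : w1 * b ^ 2 = x2 * (w1 * x2 - w2 * x1) := by
    linear_combination w1 * hx.symm + x1 * hw
  have hw2 : w2 * b ^ 2 = -x1 * (w1 * x2 - w2 * x1) := by
    linear_combination w2 * hx.symm + x2 * hw
  have hS : x1 * x2 * p11 + x2 ^ 2 * p21 - x1 ^ 2 * p12 - x1 * x2 * p22
      = -(v1 * x2 - v2 * x1) := by
    linear_combination (-1 : ℝ) * htan + (p21 - p12) * hx + (-(b ^ 2)) * hcurl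
  have key : ((w1 * p11 + w2 * p12) * x1 + (w1 * p21 + w2 * p22) * x2) * b ^ 2
      = -((v1 * x2 - v2 * x1) * (w1 * x2 - w2 * x1)) := by
    linear_combination (p11 * x1 + p21 * x2) * hw1 + (p12 * x1 + p22 * x2) * hw2
      + (w1 * x2 - w2 * x1) * hS
  have hrhs : -(1 / b) * ((v1 * x2 - v2 * x1) / b * ((w1 * x2 - w2 * x1) / b) * b)
      = -((v1 * x2 - v2 * x1) * (w1 * x2 - w2 * x1)) / b ^ 2 := by
    field_simp
  rw [hrhs, eq_div_iff (by positivity : (b : ℝ) ^ 2 ≠ 0)]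
  linear_combination key

lemma inner_algebra (a μ α x1 x2 v1 v2 w1 w2 p11 p12 p21 p22 : ℝ) (ha : 0 < a) (hμ : 0 < μ)
    (hx : x1 ^ 2 + x2 ^ 2 = a ^ 2)
    (hv : v1 * x1 + v2 * x2 = 0) (hw : w1 * x1 + w2 * x2 = 0)
    (htan : (-x2 * p11 + x1 * p21) * x1 + v1 * -x2 + ((-x2 * p12 + x1 * p22) * x2 + v2 * x1)
      = 0)
    (hns : μ * (x2 / a * -(x1 / a) * (p11 + p11) + x2 / a * -(x2 / a) * (p12 + p21)
        + -(x1 / a) * -(x1 / a) * (p21 + p12) + -(x1 / a) * -(x2 / a) * (p22 + p22))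
      = α * (v1 * (x2 / a) + v2 * -(x1 / a))) :
    (w1 * p11 + w2 * p12) * x1 + (w1 * p21 + w2 * p22) * x2
      = (1 / a - α / μ) * ((v1 * x2 - v2 * x1) / a * ((w1 * x2 - w2 * x1) / a) * a) := by
  have ha0 : (a : ℝ) ≠ 0 := ne_of_gt ha
  have hμ0 : (μ : ℝ) ≠ 0 := ne_of_gt hμ
  have hw1 : w1 * a ^ 2 = x2 * (w1 * x2 - w2 * x1) := by
    linear_combination w1 * hx.symm + x1 * hw
  have hw2 : w2 * a ^ 2 = -x1 * (w1 * x2 - w2 * x1) := by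
    linear_combination w2 * hx.symm + x2 * hw
  have hH : x1 * x2 * p11 - x1 ^ 2 * p21 + x2 ^ 2 * p12 - x1 * x2 * p22
      = -(v1 * x2 - v2 * x1) := by
    linear_combination (-1 : ℝ) * htan
  have hns'' : (μ * (-(2 * x1 * x2 * p11) - x2 ^ 2 * (p12 + p21) + x1 ^ 2 * (p21 + p12)
      + 2 * x1 * x2 * p22)) * a ^ 7 = (α * a * (v1 * x2 - v2 * x1)) * a ^ 7 := by
    field_simp at hns
    linear_combination a ^ 7 * hns
  have hns' := mul_right_cancel₀ (pow_ne_zero 7 ha0) hns''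
  have key : (x1 * x2 * p11 + x2 ^ 2 * p21 - x1 ^ 2 * p12 - x1 * x2 * p22) * μ
      = (μ - α * a) * (v1 * x2 - v2 * x1) := by
    linear_combination (-1 : ℝ) * hns' + (-μ) * hH
  have key2 : ((w1 * p11 + w2 * p12) * x1 + (w1 * p21 + w2 * p22) * x2) * (a ^ 2 * μ)
      = (μ - α * a) * ((v1 * x2 - v2 * x1) * (w1 * x2 - w2 * x1)) := by
    linear_combination μ * (p11 * x1 + p21 * x2) * hw1 + μ * (p12 * x1 + p22 * x2) * hw2
      + (w1 * x2 - w2 * x1) * key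
  have hrhs : (1 / a - α / μ) * ((v1 * x2 - v2 * x1) / a * ((w1 * x2 - w2 * x1) / a) * a)
      = (μ - α * a) * ((v1 * x2 - v2 * x1) * (w1 * x2 - w2 * x1)) / (a ^ 2 * μ) := by
    field_simp
  rw [hrhs, eq_div_iff (by positivity : (a : ℝ) ^ 2 * μ ≠ 0)]
  linear_combination key2

lemma clm_decomp (L : ℝ × ℝ →L[ℝ] ℝ × ℝ) (u : ℝ × ℝ) :
    L u = u.1 • L (1, 0) + u.2 • L (0, 1) := by
  conv_lhs => rw [show u = u.1 • ((1 : ℝ), (0 : ℝ)) + u.2 • ((0 : ℝ), (1 : ℝ)) by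
    simp [Prod.ext_iff]]
  rw [map_add, L.map_smul, L.map_smul]

lemma isCompact_cann (a b : ℝ) (hb : 0 < b) : IsCompact (cann a b) := by
  have hclosed : IsClosed (cann a b) := by
    have : cann a b
        = {x : ℝ × ℝ | a ^ 2 ≤ x.1 ^ 2 + x.2 ^ 2} ∩ {x : ℝ × ℝ | x.1 ^ 2 + x.2 ^ 2 ≤ b ^ 2} :=
      rfl
    rw [this]
    exact (isClosed_le (by fun_prop) (by fun_prop)).inter (isClosed_le (by fun_prop) (by fun_prop))
  have hbdd : Bornology.IsBounded (cann a b) := by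
    apply Bornology.IsBounded.subset ((Metric.isBounded_Icc (-b) b).prod (Metric.isBounded_Icc (-b) b))
    intro x hx
    have h1 := hx.2
    constructor
    · constructor
      · nlinarith [sq_nonneg (x.1 + b), sq_nonneg x.2]
      · nlinarith [sq_nonneg (x.1 - b), sq_nonneg x.2]
    · constructor
      · nlinarith [sq_nonneg (x.2 + b), sq_nonneg x.1]
      · nlinarith [sq_nonneg (x.2 - b), sq_nonneg x.1]
  exact Metric.isCompact_of_isClosed_isBounded hclosed hbdd

end GreenAux

open GreenAux

/-- Green-type integration-by-parts identity on the annulus for a field `v`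
satisfying the mixed boundary conditions and any tangent field `w`. -/
theorem green_identity_annulus (a b μ α : ℝ)
    (ha : 0 < a) (hab : a < b) (hμ : 0 < μ) (hα : 0 < α)
    (v w : ℝ × ℝ → ℝ × ℝ)
    (U : Set (ℝ × ℝ)) (hU : IsOpen U) (hUc : cann a b ⊆ U)
    (hv : ContDiffOn ℝ 2 v U) (hw : ContDiffOn ℝ 1 w U)
    (hvt : ∀ x : ℝ × ℝ, (x.1 ^ 2 + x.2 ^ 2 = a ^ 2 ∨ x.1 ^ 2 + x.2 ^ 2 = b ^ 2) →
      (v x).1 * x.1 + (v x).2 * x.2 = 0)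
    (hwt : ∀ x : ℝ × ℝ, (x.1 ^ 2 + x.2 ^ 2 = a ^ 2 ∨ x.1 ^ 2 + x.2 ^ 2 = b ^ 2) →
      (w x).1 * x.1 + (w x).2 * x.2 = 0)
    (hcurl : ∀ x : ℝ × ℝ, x.1 ^ 2 + x.2 ^ 2 = b ^ 2 →
      pd1 (cmp2 v) x - pd2 (cmp1 v) x = 0)
    (hns : navierSlip μ α a v) :
    -(∫ x in ann a b,
        ((pd1 (pd1 (cmp1 v)) x + pd2 (pd2 (cmp1 v)) x) * (w x).1
          + (pd1 (pd1 (cmp2 v)) x + pd2 (pd2 (cmp2 v)) x) * (w x).2))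
      = (∫ x in ann a b,
          (pd1 (cmp1 v) x * pd1 (cmp1 w) x + pd1 (cmp2 v) x * pd1 (cmp2 w) x
            + pd2 (cmp1 v) x * pd2 (cmp1 w) x + pd2 (cmp2 v) x * pd2 (cmp2 w) x))
        + (1 / a - α / μ) * bInt a (fun x => tang a v x * tang a w x)
        + (1 / b) * bInt b (fun x => tang b v x * tang b w x) := by
  have hb : 0 < b := lt_trans ha hab
  have hv1 : ContDiffOn ℝ 1 v U := hv.of_le (by norm_num)
  have hvd : ∀ y ∈ U, HasFDerivAt v (fderiv ℝ v y) y := fun y hy =>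
    ((hv1.differentiableOn one_ne_zero).differentiableAt (hU.mem_nhds hy)).hasFDerivAt
  have hwd : ∀ y ∈ U, HasFDerivAt w (fderiv ℝ w y) y := fun y hy =>
    ((hw.differentiableOn one_ne_zero).differentiableAt (hU.mem_nhds hy)).hasFDerivAt
  have hDcd : ContDiffOn ℝ 1 (fderiv ℝ v) U := hv.fderiv_of_isOpen hU (by norm_num)
  have hDd : ∀ y ∈ U, HasFDerivAt (fderiv ℝ v) (fderiv ℝ (fderiv ℝ v) y) y := fun y hy =>
    ((hDcd.differentiableOn one_ne_zero).differentiableAt (hU.mem_nhds hy)).hasFDerivAt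
  have hD2c : ContinuousOn (fderiv ℝ (fderiv ℝ v)) U :=
    hDcd.continuousOn_fderiv_of_isOpen hU le_rfl
  have hEc : ContinuousOn (fderiv ℝ w) U := hw.continuousOn_fderiv_of_isOpen hU le_rfl
  have hDc : ContinuousOn (fderiv ℝ v) U := hDcd.continuousOn
  have hwc : ContinuousOn w U := hw.continuousOn
  -- first derivative identifications
  have hp11 : ∀ y ∈ U, pd1 (cmp1 v) y = (fderiv ℝ v y (1, 0)).1 :=
    fun y hy => pd_eq1 (hvd y hy) (1, 0)
  have hp12 : ∀ y ∈ U, pd1 (cmp2 v) y = (fderiv ℝ v y (1, 0)).2 :=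
    fun y hy => pd_eq2 (hvd y hy) (1, 0)
  have hp21 : ∀ y ∈ U, pd2 (cmp1 v) y = (fderiv ℝ v y (0, 1)).1 :=
    fun y hy => pd_eq1 (hvd y hy) (0, 1)
  have hp22 : ∀ y ∈ U, pd2 (cmp2 v) y = (fderiv ℝ v y (0, 1)).2 :=
    fun y hy => pd_eq2 (hvd y hy) (0, 1)
  have hr11 : ∀ y ∈ U, pd1 (cmp1 w) y = (fderiv ℝ w y (1, 0)).1 :=
    fun y hy => pd_eq1 (hwd y hy) (1, 0)
  have hr12 : ∀ y ∈ U, pd1 (cmp2 w) y = (fderiv ℝ w y (1, 0)).2 :=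
    fun y hy => pd_eq2 (hwd y hy) (1, 0)
  have hr21 : ∀ y ∈ U, pd2 (cmp1 w) y = (fderiv ℝ w y (0, 1)).1 :=
    fun y hy => pd_eq1 (hwd y hy) (0, 1)
  have hr22 : ∀ y ∈ U, pd2 (cmp2 w) y = (fderiv ℝ w y (0, 1)).2 :=
    fun y hy => pd_eq2 (hwd y hy) (0, 1)
  -- second derivative identifications
  have happ : ∀ (u : ℝ × ℝ), ∀ y ∈ U, HasFDerivAt (fun z => fderiv ℝ v z u)
      ((ContinuousLinearMap.apply ℝ (ℝ × ℝ) u).comp (fderiv ℝ (fderiv ℝ v) y)) y :=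
    fun u y hy => (ContinuousLinearMap.apply ℝ (ℝ × ℝ) u).hasFDerivAt.comp y (hDd y hy)
  have hq1 : ∀ (u u' : ℝ × ℝ), ∀ y ∈ U,
      fderiv ℝ (fun z => (fderiv ℝ v z u).1) y u' = ((fderiv ℝ (fderiv ℝ v) y u') u).1 := by
    intro u u' y hy
    rw [((happ u y hy).fst).fderiv]
    rfl
  have hq2 : ∀ (u u' : ℝ × ℝ), ∀ y ∈ U,
      fderiv ℝ (fun z => (fderiv ℝ v z u).2) y u' = ((fderiv ℝ (fderiv ℝ v) y u') u).2 := by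
    intro u u' y hy
    rw [((happ u y hy).snd).fderiv]
    rfl
  have hs111 : ∀ y ∈ U, pd1 (pd1 (cmp1 v)) y = ((fderiv ℝ (fderiv ℝ v) y (1, 0)) (1, 0)).1 := by
    intro y hy
    have hev : pd1 (cmp1 v) =ᶠ[nhds y] (fun z => (fderiv ℝ v z (1, 0)).1) :=
      Filter.eventuallyEq_of_mem (hU.mem_nhds hy) (fun z hz => hp11 z hz)
    show fderiv ℝ (pd1 (cmp1 v)) y (1, 0) = _
    rw [hev.fderiv_eq]
    exact hq1 (1, 0) (1, 0) y hy
  have hs221 : ∀ y ∈ U, pd2 (pd2 (cmp1 v)) y = ((fderiv ℝ (fderiv ℝ v) y (0, 1)) (0, 1)).1 := by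
    intro y hy
    have hev : pd2 (cmp1 v) =ᶠ[nhds y] (fun z => (fderiv ℝ v z (0, 1)).1) :=
      Filter.eventuallyEq_of_mem (hU.mem_nhds hy) (fun z hz => hp21 z hz)
    show fderiv ℝ (pd2 (cmp1 v)) y (0, 1) = _
    rw [hev.fderiv_eq]
    exact hq1 (0, 1) (0, 1) y hy
  have hs112 : ∀ y ∈ U, pd1 (pd1 (cmp2 v)) y = ((fderiv ℝ (fderiv ℝ v) y (1, 0)) (1, 0)).2 := by
    intro y hy
    have hev : pd1 (cmp2 v) =ᶠ[nhds y] (fun z => (fderiv ℝ v z (1, 0)).2) :=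
      Filter.eventuallyEq_of_mem (hU.mem_nhds hy) (fun z hz => hp12 z hz)
    show fderiv ℝ (pd1 (cmp2 v)) y (1, 0) = _
    rw [hev.fderiv_eq]
    exact hq2 (1, 0) (1, 0) y hy
  have hs222 : ∀ y ∈ U, pd2 (pd2 (cmp2 v)) y = ((fderiv ℝ (fderiv ℝ v) y (0, 1)) (0, 1)).2 := by
    intro y hy
    have hev : pd2 (cmp2 v) =ᶠ[nhds y] (fun z => (fderiv ℝ v z (0, 1)).2) :=
      Filter.eventuallyEq_of_mem (hU.mem_nhds hy) (fun z hz => hp22 z hz)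
    show fderiv ℝ (pd2 (cmp2 v)) y (0, 1) = _
    rw [hev.fderiv_eq]
    exact hq2 (0, 1) (0, 1) y hy
  -- the flux field F
  set F : ℝ × ℝ → ℝ × ℝ := fun y =>
    ((w y).1 * pd1 (cmp1 v) y + (w y).2 * pd1 (cmp2 v) y,
     (w y).1 * pd2 (cmp1 v) y + (w y).2 * pd2 (cmp2 v) y) with hF
  have hFnice : ∀ y ∈ U, F y =
      ((w y).1 * (fderiv ℝ v y (1, 0)).1 + (w y).2 * (fderiv ℝ v y (1, 0)).2,
       (w y).1 * (fderiv ℝ v y (0, 1)).1 + (w y).2 * (fderiv ℝ v y (0, 1)).2) := by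
    intro y hy
    rw [hF]
    simp only
    rw [hp11 y hy, hp12 y hy, hp21 y hy, hp22 y hy]
  have hFcd : ContDiffOn ℝ 1 F U := by
    apply ContDiffOn.congr _ hFnice
    exact ((hw.fst.mul (hDcd.clm_apply contDiffOn_const).fst).add
        (hw.snd.mul (hDcd.clm_apply contDiffOn_const).snd)).prodMk
      ((hw.fst.mul (hDcd.clm_apply contDiffOn_const).fst).add
        (hw.snd.mul (hDcd.clm_apply contDiffOn_const).snd))
  -- divergence of F
  have hdivF : ∀ y ∈ U, pd1 (cmp1 F) y + pd2 (cmp2 F) y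
      = (((pd1 (pd1 (cmp1 v)) y + pd2 (pd2 (cmp1 v)) y) * (w y).1
          + (pd1 (pd1 (cmp2 v)) y + pd2 (pd2 (cmp2 v)) y) * (w y).2)
        + (pd1 (cmp1 v) y * pd1 (cmp1 w) y + pd1 (cmp2 v) y * pd1 (cmp2 w) y
          + pd2 (cmp1 v) y * pd2 (cmp1 w) y + pd2 (cmp2 v) y * pd2 (cmp2 w) y)) := by
    intro y hy
    have hev1 : cmp1 F =ᶠ[nhds y]
        (fun z => (w z).1 * (fderiv ℝ v z (1, 0)).1 + (w z).2 * (fderiv ℝ v z (1, 0)).2) :=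
      Filter.eventuallyEq_of_mem (hU.mem_nhds hy) (fun z hz => by
        show (F z).1 = _
        rw [hFnice z hz])
    have hev2 : cmp2 F =ᶠ[nhds y]
        (fun z => (w z).1 * (fderiv ℝ v z (0, 1)).1 + (w z).2 * (fderiv ℝ v z (0, 1)).2) :=
      Filter.eventuallyEq_of_mem (hU.mem_nhds hy) (fun z hz => by
        show (F z).2 = _
        rw [hFnice z hz])
    have hd1 := ((hwd y hy).fst.mul ((happ (1, 0) y hy).fst)).add
      ((hwd y hy).snd.mul ((happ (1, 0) y hy).snd))
    have hd2 := ((hwd y hy).fst.mul ((happ (0, 1) y hy).fst)).add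
      ((hwd y hy).snd.mul ((happ (0, 1) y hy).snd))
    have e1 : pd1 (cmp1 F) y
        = (w y).1 * ((fderiv ℝ (fderiv ℝ v) y (1, 0)) (1, 0)).1
            + (fderiv ℝ v y (1, 0)).1 * (fderiv ℝ w y (1, 0)).1
          + ((w y).2 * ((fderiv ℝ (fderiv ℝ v) y (1, 0)) (1, 0)).2
            + (fderiv ℝ v y (1, 0)).2 * (fderiv ℝ w y (1, 0)).2) := by
      show fderiv ℝ (cmp1 F) y (1, 0) = _
      rw [hev1.fderiv_eq, HasFDerivAt.fderiv
        (f := fun z => (w z).1 * (fderiv ℝ v z (1, 0)).1 + (w z).2 * (fderiv ℝ v z (1, 0)).2) hd1]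
      simp [ContinuousLinearMap.add_apply, ContinuousLinearMap.smul_apply,
        ContinuousLinearMap.comp_apply, ContinuousLinearMap.apply_apply]
    have e2 : pd2 (cmp2 F) y
        = (w y).1 * ((fderiv ℝ (fderiv ℝ v) y (0, 1)) (0, 1)).1
            + (fderiv ℝ v y (0, 1)).1 * (fderiv ℝ w y (0, 1)).1
          + ((w y).2 * ((fderiv ℝ (fderiv ℝ v) y (0, 1)) (0, 1)).2
            + (fderiv ℝ v y (0, 1)).2 * (fderiv ℝ w y (0, 1)).2) := by
      show fderiv ℝ (cmp2 F) y (0, 1) = _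
      rw [hev2.fderiv_eq, HasFDerivAt.fderiv
        (f := fun z => (w z).1 * (fderiv ℝ v z (0, 1)).1 + (w z).2 * (fderiv ℝ v z (0, 1)).2) hd2]
      simp [ContinuousLinearMap.add_apply, ContinuousLinearMap.smul_apply,
        ContinuousLinearMap.comp_apply, ContinuousLinearMap.apply_apply]
    rw [e1, e2, hs111 y hy, hs221 y hy, hs112 y hy, hs222 y hy, hp11 y hy, hp12 y hy,
      hp21 y hy, hp22 y hy, hr11 y hy, hr12 y hy, hr21 y hy, hr22 y hy]
    ring
  -- integrability of the two integrands
  have hcpt := isCompact_cann a b hb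
  have hD2app : ∀ (u u' : ℝ × ℝ),
      ContinuousOn (fun x => (fderiv ℝ (fderiv ℝ v) x u) u') U := fun u u' =>
    (hD2c.clm_apply continuousOn_const).clm_apply continuousOn_const
  have hI1c : ContinuousOn (fun x =>
      ((pd1 (pd1 (cmp1 v)) x + pd2 (pd2 (cmp1 v)) x) * (w x).1
        + (pd1 (pd1 (cmp2 v)) x + pd2 (pd2 (cmp2 v)) x) * (w x).2)) U := by
    have hc : ContinuousOn (fun x =>
        ((((fderiv ℝ (fderiv ℝ v) x (1, 0)) (1, 0)).1
            + ((fderiv ℝ (fderiv ℝ v) x (0, 1)) (0, 1)).1) * (w x).1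
          + (((fderiv ℝ (fderiv ℝ v) x (1, 0)) (1, 0)).2
            + ((fderiv ℝ (fderiv ℝ v) x (0, 1)) (0, 1)).2) * (w x).2)) U :=
      ContinuousOn.add
        (ContinuousOn.mul ((hD2app (1, 0) (1, 0)).fst.add (hD2app (0, 1) (0, 1)).fst) hwc.fst)
        (ContinuousOn.mul ((hD2app (1, 0) (1, 0)).snd.add (hD2app (0, 1) (0, 1)).snd) hwc.snd)
    apply hc.congr
    intro y hy
    simp only []
    rw [hs111 y hy, hs221 y hy, hs112 y hy, hs222 y hy]
  have hI2c : ContinuousOn (fun x =>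
      (pd1 (cmp1 v) x * pd1 (cmp1 w) x + pd1 (cmp2 v) x * pd1 (cmp2 w) x
        + pd2 (cmp1 v) x * pd2 (cmp1 w) x + pd2 (cmp2 v) x * pd2 (cmp2 w) x)) U := by
    have hc : ContinuousOn (fun x =>
        ((fderiv ℝ v x (1, 0)).1 * (fderiv ℝ w x (1, 0)).1
          + (fderiv ℝ v x (1, 0)).2 * (fderiv ℝ w x (1, 0)).2
          + (fderiv ℝ v x (0, 1)).1 * (fderiv ℝ w x (0, 1)).1
          + (fderiv ℝ v x (0, 1)).2 * (fderiv ℝ w x (0, 1)).2)) U :=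
      ((((hDc.clm_apply continuousOn_const).fst.mul
          (hEc.clm_apply continuousOn_const).fst).add
        ((hDc.clm_apply continuousOn_const).snd.mul
          (hEc.clm_apply continuousOn_const).snd)).add
        ((hDc.clm_apply continuousOn_const).fst.mul
          (hEc.clm_apply continuousOn_const).fst)).add
        ((hDc.clm_apply continuousOn_const).snd.mul
          (hEc.clm_apply continuousOn_const).snd)
    apply hc.congr
    intro y hy
    simp only []
    rw [hp11 y hy, hp12 y hy, hp21 y hy, hp22 y hy, hr11 y hy, hr12 y hy, hr21 y hy,
      hr22 y hy]
  have hI1 : IntegrableOn (fun x =>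
      ((pd1 (pd1 (cmp1 v)) x + pd2 (pd2 (cmp1 v)) x) * (w x).1
        + (pd1 (pd1 (cmp2 v)) x + pd2 (pd2 (cmp2 v)) x) * (w x).2)) (ann a b) :=
    ((hI1c.mono hUc).integrableOn_compact hcpt).mono_set (ann_subset_cann a b)
  have hI2 : IntegrableOn (fun x =>
      (pd1 (cmp1 v) x * pd1 (cmp1 w) x + pd1 (cmp2 v) x * pd1 (cmp2 w) x
        + pd2 (cmp1 v) x * pd2 (cmp1 w) x + pd2 (cmp2 v) x * pd2 (cmp2 w) x)) (ann a b) :=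
    ((hI2c.mono hUc).integrableOn_compact hcpt).mono_set (ann_subset_cann a b)
  have hdiv := GreenAux.div_annulus a b ha hab F U hU hUc hFcd
  have hsplit : (∫ x in ann a b, (pd1 (cmp1 F) x + pd2 (cmp2 F) x))
      = (∫ x in ann a b,
          ((pd1 (pd1 (cmp1 v)) x + pd2 (pd2 (cmp1 v)) x) * (w x).1
            + (pd1 (pd1 (cmp2 v)) x + pd2 (pd2 (cmp2 v)) x) * (w x).2))
        + ∫ x in ann a b,
          (pd1 (cmp1 v) x * pd1 (cmp1 w) x + pd1 (cmp2 v) x * pd1 (cmp2 w) x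
            + pd2 (cmp1 v) x * pd2 (cmp1 w) x + pd2 (cmp2 v) x * pd2 (cmp2 w) x) := by
    rw [setIntegral_congr_fun (isOpen_ann a b).measurableSet
      (fun y hy => hdivF y (hUc (ann_subset_cann a b hy)))]
    exact integral_add hI1 hI2
  -- outer boundary term
  have hOuter : (∫ θ in (0:ℝ)..(2*π), pA F (b, θ))
      = -(1/b) * bInt b (fun x => tang b v x * tang b w x) := by
    rw [bInt, ← intervalIntegral.integral_const_mul]
    apply intervalIntegral.integral_congr
    intro θ _
    have hx2 : ((b * Real.cos θ, b * Real.sin θ) : ℝ × ℝ).1 ^ 2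
        + ((b * Real.cos θ, b * Real.sin θ) : ℝ × ℝ).2 ^ 2 = b ^ 2 := Phi_sq (b, θ)
    have hxc : ((b * Real.cos θ, b * Real.sin θ) : ℝ × ℝ) ∈ cann a b :=
      ⟨by rw [hx2]; nlinarith, le_of_eq hx2⟩
    have hxU : ((b * Real.cos θ, b * Real.sin θ) : ℝ × ℝ) ∈ U := hUc hxc
    have hvtx := hvt _ (Or.inr hx2)
    have hwtx := hwt _ (Or.inr hx2)
    have hcurlx := hcurl _ hx2
    rw [hp12 _ hxU, hp21 _ hxU] at hcurlx
    have hzero : (fun t => pA v (b, t)) = (fun _ => 0) := by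
      funext t
      exact hvt (Phi (b, t)) (Or.inr (Phi_sq (b, t)))
    have htan0 : pAt' v (b, θ) = 0 := by
      have hd := hasDerivAt_pAt hvd (show Phi (b, θ) ∈ U from hxU)
      have h0 : HasDerivAt (fun t => pA v (b, t)) 0 θ := by
        rw [hzero]; exact hasDerivAt_const θ 0
      exact hd.unique h0
    have htan1 := htan0
    simp only [pAt'] at htan1
    rw [clm_decomp (fderiv ℝ v (Phi (b, θ)))] at htan1
    simp only [Phi, Prod.smul_fst, Prod.smul_snd, Prod.fst_add, Prod.snd_add,
      smul_eq_mul] at htan1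
    set x : ℝ × ℝ := (b * Real.cos θ, b * Real.sin θ) with hxdef
    have halg := outer_algebra b x.1 x.2 (v x).1 (v x).2 (w x).1 (w x).2
      ((fderiv ℝ v x) (1, 0)).1 ((fderiv ℝ v x) (1, 0)).2
      ((fderiv ℝ v x) (0, 1)).1 ((fderiv ℝ v x) (0, 1)).2
      hb hx2 hvtx hwtx (by linear_combination hcurlx) (by linear_combination htan1)
    show (F x).1 * x.1 + (F x).2 * x.2 = _
    rw [hFnice x hxU]
    simp only [tang]
    linear_combination halg
  -- inner boundary term
  have hInner : (∫ θ in (0:ℝ)..(2*π), pA F (a, θ))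
      = (1/a - α/μ) * bInt a (fun x => tang a v x * tang a w x) := by
    rw [bInt, ← intervalIntegral.integral_const_mul]
    apply intervalIntegral.integral_congr
    intro θ _
    have hx2 : ((a * Real.cos θ, a * Real.sin θ) : ℝ × ℝ).1 ^ 2
        + ((a * Real.cos θ, a * Real.sin θ) : ℝ × ℝ).2 ^ 2 = a ^ 2 := Phi_sq (a, θ)
    have hxc : ((a * Real.cos θ, a * Real.sin θ) : ℝ × ℝ) ∈ cann a b :=
      ⟨le_of_eq hx2.symm, by rw [hx2]; nlinarith⟩
    have hxU : ((a * Real.cos θ, a * Real.sin θ) : ℝ × ℝ) ∈ U := hUc hxc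
    have hvtx := hvt _ (Or.inl hx2)
    have hwtx := hwt _ (Or.inl hx2)
    have hnsx := hns _ hx2
    rw [hp11 _ hxU, hp12 _ hxU, hp21 _ hxU, hp22 _ hxU] at hnsx
    have hzero : (fun t => pA v (a, t)) = (fun _ => 0) := by
      funext t
      exact hvt (Phi (a, t)) (Or.inl (Phi_sq (a, t)))
    have htan0 : pAt' v (a, θ) = 0 := by
      have hd := hasDerivAt_pAt hvd (show Phi (a, θ) ∈ U from hxU)
      have h0 : HasDerivAt (fun t => pA v (a, t)) 0 θ := by
        rw [hzero]; exact hasDerivAt_const θ 0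
      exact hd.unique h0
    have htan1 := htan0
    simp only [pAt'] at htan1
    rw [clm_decomp (fderiv ℝ v (Phi (a, θ)))] at htan1
    simp only [Phi, Prod.smul_fst, Prod.smul_snd, Prod.fst_add, Prod.snd_add,
      smul_eq_mul] at htan1
    set x : ℝ × ℝ := (a * Real.cos θ, a * Real.sin θ) with hxdef
    have halg := inner_algebra a μ α x.1 x.2 (v x).1 (v x).2 (w x).1 (w x).2
      ((fderiv ℝ v x) (1, 0)).1 ((fderiv ℝ v x) (1, 0)).2
      ((fderiv ℝ v x) (0, 1)).1 ((fderiv ℝ v x) (0, 1)).2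
      ha hμ hx2 hvtx hwtx (by linear_combination htan1) (by linear_combination hnsx)
    show (F x).1 * x.1 + (F x).2 * x.2 = _
    rw [hFnice x hxU]
    simp only [tang]
    linear_combination halg
  linarith [hdiv, hsplit, hOuter, hInner]
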